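/- For the Lorenz system drift f₀(x) = Lx + Φ(x) with Φ(x) = (0, −x₁x₃, x₁x₂) and a single control vector f ∈ span{e₃}^⊥ (i.e., f₃ = 0), the bad bracket value [[f₀,f],f](0) = 2Φ(f) = (0, 0, 2f₁f₂) lies in span{e₃}, while span{f, Lf, L²f} ⊆ span{e₁, e₂}. Hence if f₁f₂ ≠ 0 then [[f₀,f],f](0) ∉ span{f, Lf, L²f}. -/
import Mathlib

lemma mem_span_e01 (v : Fin 3 → ℝ) (hv : v 2 = 0) :
    v ∈ Submodule.span ℝ {(Pi.single 0 1 : Fin 3 → ℝ), (Pi.single 1 1 : Fin 3 → ℝ)} := by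
  have : v = v 0 • (Pi.single 0 1 : Fin 3 → ℝ) + v 1 • (Pi.single 1 1 : Fin 3 → ℝ) := by
    funext i
    fin_cases i <;> simp [Pi.single, Function.update, hv]
  rw [this]
  exact Submodule.add_mem _
    (Submodule.smul_mem _ _ (Submodule.subset_span (by simp)))
    (Submodule.smul_mem _ _ (Submodule.subset_span (by simp)))

lemma span_e01_coord (v : Fin 3 → ℝ)
    (hv : v ∈ Submodule.span ℝ {(Pi.single 0 1 : Fin 3 → ℝ), (Pi.single 1 1 : Fin 3 → ℝ)}) :
    v 2 = 0 := by
  induction hv using Submodule.span_induction with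
  | mem x hx =>
    rcases hx with h | h <;> subst h <;> simp [Pi.single, Function.update]
  | zero => simp
  | add x y _ _ hx hy => simp [hx, hy]
  | smul a x _ hx => simp [hx]

theorem lorenz_bad_bracket (σ ρ β : ℝ) (hσ : 0 < σ) (hρ : 0 < ρ) (hβ : 0 < β)
    (L : (Fin 3 → ℝ) → (Fin 3 → ℝ))
    (hL : ∀ x, L x = ![-σ * x 0 + σ * x 1, ρ * x 0 - x 1, -β * x 2])
    (Φ : (Fin 3 → ℝ) → (Fin 3 → ℝ))
    (hΦ : ∀ x, Φ x = ![0, -(x 0 * x 2), x 0 * x 1])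
    (f : Fin 3 → ℝ) (hf : f 2 = 0) :
    ((2 : ℝ) • Φ f ∈ Submodule.span ℝ {(Pi.single 2 1 : Fin 3 → ℝ)}) ∧
    (Submodule.span ℝ {f, L f, L (L f)} ≤
      Submodule.span ℝ {(Pi.single 0 1 : Fin 3 → ℝ), (Pi.single 1 1 : Fin 3 → ℝ)}) ∧
    (f 0 * f 1 ≠ 0 → (2 : ℝ) • Φ f ∉ Submodule.span ℝ {f, L f, L (L f)}) := by
  have hspan : Submodule.span ℝ {f, L f, L (L f)} ≤
      Submodule.span ℝ {(Pi.single 0 1 : Fin 3 → ℝ), (Pi.single 1 1 : Fin 3 → ℝ)} := by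
    rw [Submodule.span_le]
    rintro x (h | h | h) <;> subst h <;> apply mem_span_e01
    · exact hf
    · rw [hL]; simp [hf]
    · rw [hL, hL]; simp [hf]
  refine ⟨?_, hspan, ?_⟩
  · have : (2 : ℝ) • Φ f = (2 * (f 0 * f 1)) • (Pi.single 2 1 : Fin 3 → ℝ) := by
      rw [hΦ]
      funext i
      fin_cases i <;> simp [Pi.single, Function.update, hf] <;> ring
    rw [this]
    exact Submodule.smul_mem _ _ (Submodule.subset_span rfl)
  · intro hne hmem
    have h2 : ((2 : ℝ) • Φ f) 2 = 0 := span_e01_coord _ (hspan hmem)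
    rw [hΦ] at h2
    simp at h2
    exact hne (mul_eq_zero.mpr h2)
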